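/- Tweedie's formula: if μ ∼ ϑ and X|μ ∼ N(μ,1), then the posterior mean satisfies E[μ | X = x] = x + f′(x)/f(x) = x + ∇ log f(x), where f = ϑ ∗ φ is the marginal density of X. -/

import Mathlib

open MeasureTheory ProbabilityTheory Filter
open scoped ENNReal NNReal

/-- Standard normal density. -/
noncomputable def stdGaussPDF (v : ℝ) : ℝ := (Real.sqrt (2 * Real.pi))⁻¹ * Real.exp (-v^2 / 2)

section Aux

lemma stdGaussPDF_eq (m x : ℝ) : gaussianPDFReal m 1 x = stdGaussPDF (x - m) := by
  simp [gaussianPDFReal, stdGaussPDF, neg_div]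

lemma stdGaussPDF_nonneg (v : ℝ) : 0 ≤ stdGaussPDF v := by
  unfold stdGaussPDF; positivity

lemma stdGaussPDF_le (v : ℝ) : stdGaussPDF v ≤ (Real.sqrt (2 * Real.pi))⁻¹ := by
  unfold stdGaussPDF
  have h1 : Real.exp (-v^2 / 2) ≤ 1 := by
    rw [Real.exp_le_one_iff]; nlinarith [sq_nonneg v]
  have h2 : (0:ℝ) ≤ (Real.sqrt (2 * Real.pi))⁻¹ := by positivity
  nlinarith

lemma continuous_stdGaussPDF : Continuous stdGaussPDF := by
  unfold stdGaussPDF; fun_prop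

lemma measurable_gaussPDFpair : Measurable (fun p : ℝ × ℝ => gaussianPDF p.1 1 p.2) := by
  refine Measurable.ennreal_ofReal ?_
  have : Continuous fun p : ℝ × ℝ => gaussianPDFReal p.1 1 p.2 := by
    simp_rw [gaussianPDFReal]; fun_prop
  exact this.measurable

lemma measurable_kF :
    Measurable (fun m : ℝ => Measure.map (fun x => (x, m)) (gaussianReal m 1)) := by
  apply Measure.measurable_of_measurable_coe
  intro s hs
  have h1 : ∀ m : ℝ, (Measure.map (fun x => (x, m)) (gaussianReal m 1)) s
      = ∫⁻ x, ((fun x => (x, m)) ⁻¹' s).indicator (gaussianPDF m 1) x := by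
    intro m
    rw [Measure.map_apply measurable_prodMk_right hs,
      gaussianReal_apply m one_ne_zero,
      lintegral_indicator (hs.preimage measurable_prodMk_right) _]
  simp_rw [h1]
  have h2 : (fun p : ℝ × ℝ => ((fun x => (x, p.1)) ⁻¹' s).indicator (gaussianPDF p.1 1) p.2)
      = fun p : ℝ × ℝ => s.indicator (fun _ => (1:ℝ≥0∞)) (p.2, p.1) * gaussianPDF p.1 1 p.2 := by
    funext p
    by_cases hp : (p.2, p.1) ∈ s <;> simp [Set.indicator_apply, hp]
  have h3 : Measurable (fun p : ℝ × ℝ =>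
      ((fun x => (x, p.1)) ⁻¹' s).indicator (gaussianPDF p.1 1) p.2) := by
    rw [h2]
    exact ((measurable_one.indicator hs).comp
      (measurable_snd.prodMk measurable_fst)).mul measurable_gaussPDFpair
  exact Measurable.lintegral_prod_right h3

lemma pi_eq (ϑ : Measure ℝ) [IsProbabilityMeasure ϑ] :
    Measure.bind ϑ (fun m => Measure.map (fun x => (x, m)) (gaussianReal m 1))
      = Measure.map (MeasurableEquiv.prodComm : ℝ × ℝ ≃ᵐ ℝ × ℝ)
          ((ϑ.prod volume).withDensity (fun p => gaussianPDF p.1 1 p.2)) := by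
  ext s hs
  rw [Measure.bind_apply hs measurable_kF.aemeasurable,
    Measure.map_apply (MeasurableEquiv.prodComm : ℝ × ℝ ≃ᵐ ℝ × ℝ).measurable hs]
  have hpre : MeasurableSet ((MeasurableEquiv.prodComm : ℝ × ℝ ≃ᵐ ℝ × ℝ) ⁻¹' s) :=
    hs.preimage (MeasurableEquiv.prodComm : ℝ × ℝ ≃ᵐ ℝ × ℝ).measurable
  rw [withDensity_apply _ hpre,
    ← lintegral_indicator hpre _,
    lintegral_prod _ ((measurable_gaussPDFpair.indicator hpre).aemeasurable)]
  refine lintegral_congr fun m => ?_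
  have hpre2 : MeasurableSet ((fun x : ℝ => (x, m)) ⁻¹' s) :=
    hs.preimage measurable_prodMk_right
  rw [Measure.map_apply measurable_prodMk_right hs,
    gaussianReal_apply m one_ne_zero,
    ← lintegral_indicator hpre2 _]
  refine lintegral_congr fun x => ?_
  by_cases hx : (x, m) ∈ s <;>
    simp [Set.indicator_apply, hx, MeasurableEquiv.prodComm]

lemma integral_pi (ϑ : Measure ℝ) [IsProbabilityMeasure ϑ] (g : ℝ × ℝ → ℝ)
    (hg : Integrable (fun p : ℝ × ℝ => stdGaussPDF (p.2 - p.1) * g (p.2, p.1)) (ϑ.prod volume)) :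
    ∫ z, g z ∂(Measure.bind ϑ (fun m => Measure.map (fun x => (x, m)) (gaussianReal m 1)))
      = ∫ x, ∫ m, stdGaussPDF (x - m) * g (x, m) ∂ϑ := by
  rw [pi_eq, integral_map_equiv]
  have hmeas : Measurable (fun p : ℝ × ℝ => (gaussianPDFReal p.1 1 p.2).toNNReal) := by
    have : Continuous fun p : ℝ × ℝ => gaussianPDFReal p.1 1 p.2 := by
      simp_rw [gaussianPDFReal]; fun_prop
    exact this.measurable.real_toNNReal
  have hD : (fun p : ℝ × ℝ => gaussianPDF p.1 1 p.2)
      = fun p : ℝ × ℝ => ((gaussianPDFReal p.1 1 p.2).toNNReal : ℝ≥0∞) := rfl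
  rw [hD, integral_withDensity_eq_integral_smul hmeas]
  have heq : (fun p : ℝ × ℝ =>
        (gaussianPDFReal p.1 1 p.2).toNNReal • g ((MeasurableEquiv.prodComm : ℝ × ℝ ≃ᵐ ℝ × ℝ) p))
      = fun p : ℝ × ℝ => stdGaussPDF (p.2 - p.1) * g (p.2, p.1) := by
    funext p
    rw [NNReal.smul_def, Real.coe_toNNReal _ (gaussianPDFReal_nonneg _ _ _), stdGaussPDF_eq]
    rfl
  rw [heq, integral_prod _ hg]
  exact integral_integral_swap hg

end Aux

/-- Tweedie's formula: if `μ ∼ ϑ` and `X | μ ∼ N(μ, 1)`, then the posterior mean satisfies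
`E[μ | X = x] = x + f′(x)/f(x)` where `f = ϑ ∗ φ` is the marginal density of `X`.  The
posterior-mean property is expressed by equality of integrals over all events `{X ∈ A}` under
the joint distribution `π` of `(X, μ)`. -/
theorem tweedie_formula (ϑ : Measure ℝ) [IsProbabilityMeasure ϑ]
    (hmom : Integrable (fun m => m) ϑ)
    (f f' : ℝ → ℝ)
    (hf : ∀ x, f x = ∫ m, stdGaussPDF (x - m) ∂ϑ)
    (hf' : ∀ x, f' x = ∫ m, -((x - m) * stdGaussPDF (x - m)) ∂ϑ)
    (hfderiv : ∀ x, HasDerivAt f (f' x) x)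
    (hfpos : ∀ x, 0 < f x) :
    ∀ A : Set ℝ, MeasurableSet A →
      ∫ z in {z : ℝ × ℝ | z.1 ∈ A}, z.2
          ∂(Measure.bind ϑ (fun m => Measure.map (fun x => (x, m)) (gaussianReal m 1))) =
        ∫ z in {z : ℝ × ℝ | z.1 ∈ A}, z.1 + f' z.1 / f z.1
          ∂(Measure.bind ϑ (fun m => Measure.map (fun x => (x, m)) (gaussianReal m 1))) := by
  intro A hA
  classical
  set C : ℝ := (Real.sqrt (2 * Real.pi))⁻¹ with hC
  have hφm : ∀ x : ℝ, Measurable (fun m : ℝ => stdGaussPDF (x - m)) :=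
    fun x => (continuous_stdGaussPDF.comp (continuous_const.sub continuous_id)).measurable
  have hφxm : ∀ m : ℝ, Measurable (fun x : ℝ => stdGaussPDF (x - m)) :=
    fun m => (continuous_stdGaussPDF.comp (continuous_id.sub continuous_const)).measurable
  have hφi : ∀ x : ℝ, Integrable (fun m : ℝ => stdGaussPDF (x - m)) ϑ := by
    intro x
    refine (integrable_const C).mono' (hφm x).aestronglyMeasurable ?_
    refine Filter.Eventually.of_forall fun m => ?_
    rw [Real.norm_eq_abs, abs_of_nonneg (stdGaussPDF_nonneg _)]
    exact stdGaussPDF_le _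
  have hmφi : ∀ x : ℝ, Integrable (fun m : ℝ => m * stdGaussPDF (x - m)) ϑ := by
    intro x
    refine (hmom.abs.mul_const C).mono'
      (measurable_id.mul (hφm x)).aestronglyMeasurable ?_
    refine Filter.Eventually.of_forall fun m => ?_
    rw [Real.norm_eq_abs, abs_mul, abs_of_nonneg (stdGaussPDF_nonneg _)]
    exact mul_le_mul_of_nonneg_left (stdGaussPDF_le _) (abs_nonneg m)
  have P : ∀ x : ℝ, x * f x + f' x = ∫ m, m * stdGaussPDF (x - m) ∂ϑ := by
    intro x
    have h1 : Integrable (fun m : ℝ => x * stdGaussPDF (x - m)) ϑ := (hφi x).const_mul x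
    have heq : (fun m : ℝ => -((x - m) * stdGaussPDF (x - m)))
        = fun m : ℝ => m * stdGaussPDF (x - m) - x * stdGaussPDF (x - m) := by
      funext m; ring
    rw [hf, hf', heq, integral_sub (hmφi x) h1, ← integral_const_mul]
    ring
  set c : ℝ → ℝ := fun x => x + f' x / f x with hc
  have hfc : Continuous f := by
    have : Differentiable ℝ f := fun x => (hfderiv x).differentiableAt
    exact this.continuous
  have hf'm : Measurable f' := by
    have : f' = deriv f := funext fun x => ((hfderiv x).deriv).symm
    rw [this]; exact measurable_deriv f
  have hcm : Measurable c := measurable_id.add (hf'm.div hfc.measurable)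
  have hcf : ∀ x : ℝ, c x * f x = x * f x + f' x := by
    intro x
    rw [hc]
    simp only
    rw [add_mul, div_mul_cancel₀ _ (hfpos x).ne']
  set S : Set (ℝ × ℝ) := {z : ℝ × ℝ | z.1 ∈ A} with hS
  have hSm : MeasurableSet S := hA.preimage measurable_fst
  set ind : ℝ → ℝ := A.indicator (fun _ => (1:ℝ)) with hind
  have hindm : Measurable ind := measurable_one.indicator hA
  have hind01 : ∀ x, 0 ≤ ind x ∧ ind x ≤ 1 := by
    intro x; by_cases hx : x ∈ A <;> simp [hind, Set.indicator_apply, hx]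
  have hΦm : Measurable (fun p : ℝ × ℝ => stdGaussPDF (p.2 - p.1)) :=
    (continuous_stdGaussPDF.comp (continuous_snd.sub continuous_fst)).measurable
  set u₁ : ℝ × ℝ → ℝ := fun p => stdGaussPDF (p.2 - p.1) * (ind p.2 * p.1) with hu₁
  set u₂ : ℝ × ℝ → ℝ := fun p => stdGaussPDF (p.2 - p.1) * (ind p.2 * c p.2) with hu₂
  have hu₁m : Measurable u₁ :=
    hΦm.mul ((hindm.comp measurable_snd).mul measurable_fst)
  have hu₂m : Measurable u₂ :=
    hΦm.mul ((hindm.comp measurable_snd).mul (hcm.comp measurable_snd))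
  -- rows of u₁ and the pointwise bound
  have hbd₁ : ∀ m x : ℝ, ‖u₁ (m, x)‖ ≤ |m| * gaussianPDFReal m 1 x := by
    intro m x
    rw [hu₁]
    simp only
    rw [Real.norm_eq_abs, abs_mul, abs_mul, abs_of_nonneg (stdGaussPDF_nonneg _),
      stdGaussPDF_eq]
    have h1 := (hind01 x).1
    have h2 := (hind01 x).2
    have h3 := stdGaussPDF_nonneg (x - m)
    have h4 : |ind x| = ind x := abs_of_nonneg h1
    rw [h4]
    nlinarith [mul_nonneg (mul_nonneg h3 (abs_nonneg m)) (sub_nonneg.mpr h2)]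
  have hrow₁ : ∀ m : ℝ, Integrable (fun x => u₁ (m, x)) volume := by
    intro m
    refine ((integrable_gaussianPDFReal m 1).const_mul |m|).mono'
      ((hφxm m).mul (hindm.mul measurable_const)).aestronglyMeasurable ?_
    exact Filter.Eventually.of_forall fun x => hbd₁ m x
  have hu₁int : Integrable u₁ (ϑ.prod volume) := by
    rw [integrable_prod_iff hu₁m.aestronglyMeasurable]
    refine ⟨Filter.Eventually.of_forall hrow₁, ?_⟩
    refine hmom.abs.mono'
      (hu₁m.aestronglyMeasurable.norm.integral_prod_right') ?_
    refine Filter.Eventually.of_forall fun m => ?_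
    rw [Real.norm_eq_abs, abs_of_nonneg (integral_nonneg fun x => norm_nonneg _)]
    calc ∫ x, ‖u₁ (m, x)‖ ≤ ∫ x, |m| * gaussianPDFReal m 1 x :=
          integral_mono (hrow₁ m).norm ((integrable_gaussianPDFReal m 1).const_mul |m|)
            (hbd₁ m)
      _ = |m| := by
          rw [integral_const_mul, integral_gaussianPDFReal_eq_one m one_ne_zero, mul_one]
  -- integrability of |m| φ(x-m) and its marginal
  have huu : Integrable (fun p : ℝ × ℝ => |p.1| * stdGaussPDF (p.2 - p.1)) (ϑ.prod volume) := by
    rw [integrable_prod_iff (f := fun p : ℝ × ℝ => |p.1| * stdGaussPDF (p.2 - p.1))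
      (measurable_fst.abs.mul hΦm).aestronglyMeasurable]
    have hrow : ∀ m : ℝ, Integrable (fun x => |m| * stdGaussPDF (x - m)) volume := by
      intro m
      have h := (integrable_gaussianPDFReal m 1).const_mul |m|
      simp_rw [stdGaussPDF_eq] at h
      exact h
    refine ⟨Filter.Eventually.of_forall hrow, ?_⟩
    refine hmom.abs.mono'
      ((measurable_fst.abs.mul hΦm).aestronglyMeasurable.norm.integral_prod_right') ?_
    refine Filter.Eventually.of_forall fun m => ?_
    rw [Real.norm_eq_abs, abs_of_nonneg (integral_nonneg fun x => norm_nonneg _)]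
    have heq : (fun x => ‖|m| * stdGaussPDF (x - m)‖) = fun x => |m| * gaussianPDFReal m 1 x := by
      funext x
      rw [Real.norm_eq_abs, abs_mul, abs_abs, abs_of_nonneg (stdGaussPDF_nonneg _),
        stdGaussPDF_eq]
    rw [heq, integral_const_mul, integral_gaussianPDFReal_eq_one m one_ne_zero, mul_one]
  have hgint : Integrable (fun x => ∫ m, |m| * stdGaussPDF (x - m) ∂ϑ) volume :=
    huu.integral_prod_right
  -- integrability of u₂
  have hrow₂ : ∀ x : ℝ, Integrable (fun m => u₂ (m, x)) ϑ := by
    intro x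
    simpa [hu₂] using (hφi x).mul_const (ind x * c x)
  have hu₂int : Integrable u₂ (ϑ.prod volume) := by
    rw [integrable_prod_iff' hu₂m.aestronglyMeasurable]
    refine ⟨Filter.Eventually.of_forall hrow₂, ?_⟩
    refine hgint.mono'
      (hu₂m.stronglyMeasurable.norm.integral_prod_left').aestronglyMeasurable ?_
    refine Filter.Eventually.of_forall fun x => ?_
    rw [Real.norm_eq_abs, abs_of_nonneg (integral_nonneg fun m => norm_nonneg _)]
    have hcomp : ∫ m, ‖u₂ (m, x)‖ ∂ϑ = |ind x * c x| * f x := by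
      have heq : (fun m => ‖u₂ (m, x)‖)
          = fun m => stdGaussPDF (x - m) * |ind x * c x| := by
        funext m
        rw [hu₂]
        simp only
        rw [Real.norm_eq_abs, abs_mul, abs_of_nonneg (stdGaussPDF_nonneg _)]
      rw [heq, integral_mul_const, ← hf x, mul_comm]
    rw [hcomp]
    calc |ind x * c x| * f x ≤ |c x| * f x := by
          have h1 : |ind x * c x| ≤ |c x| := by
            rw [abs_mul, abs_of_nonneg (hind01 x).1]
            nlinarith [(hind01 x).1, (hind01 x).2, abs_nonneg (c x)]
          exact mul_le_mul_of_nonneg_right h1 (hfpos x).le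
      _ = |c x * f x| := by rw [abs_mul, abs_of_nonneg (hfpos x).le]
      _ = |x * f x + f' x| := by rw [hcf]
      _ = |∫ m, m * stdGaussPDF (x - m) ∂ϑ| := by rw [P]
      _ ≤ ∫ m, |m| * |stdGaussPDF (x - m)| ∂ϑ := by
          simpa [Real.norm_eq_abs, abs_mul] using norm_integral_le_integral_norm
            (fun m => m * stdGaussPDF (x - m)) (μ := ϑ)
      _ = ∫ m, |m| * stdGaussPDF (x - m) ∂ϑ := by
          refine integral_congr_ae (Filter.Eventually.of_forall fun m => ?_)
          simp [abs_of_nonneg (stdGaussPDF_nonneg (x - m))]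
  -- relate indicator integrands to u₁, u₂
  have hind₁ : (fun p : ℝ × ℝ => stdGaussPDF (p.2 - p.1)
      * (S.indicator (fun z => z.2) (p.2, p.1))) = u₁ := by
    funext p
    by_cases hp : p.2 ∈ A <;>
      simp [hu₁, hS, hind, Set.indicator_apply, hp]
  have hind₂ : (fun p : ℝ × ℝ => stdGaussPDF (p.2 - p.1)
      * (S.indicator (fun z => z.1 + f' z.1 / f z.1) (p.2, p.1))) = u₂ := by
    funext p
    by_cases hp : p.2 ∈ A <;>
      simp [hu₂, hS, hc, hind, Set.indicator_apply, hp]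
  -- main computation
  rw [← integral_indicator hSm, ← integral_indicator hSm,
    integral_pi ϑ _ (hind₁ ▸ hu₁int), integral_pi ϑ _ (hind₂ ▸ hu₂int)]
  refine integral_congr_ae (Filter.Eventually.of_forall fun x => ?_)
  by_cases hx : x ∈ A
  · simp only [hS, Set.indicator_apply, Set.mem_setOf_eq, hx, if_true]
    have h1 : (fun m : ℝ => stdGaussPDF (x - m) * m) = fun m => m * stdGaussPDF (x - m) :=
      funext fun m => mul_comm _ _
    rw [h1, ← P x, integral_mul_const, ← hf x]
    have hfx := (hfpos x).ne'
    field_simp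
  · simp [hS, Set.indicator_apply, hx]
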